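/- arXiv:1402.6096 — 2 statements merged into one kernel-verified Lean document; each statement's English description precedes it below -/
import Mathlib

section
/- In the gadget orientation for a triangle abc with ∠b ≤ ∠c ≤ ∠a, where the segment bc is horizontal with b left of c, a above the line through bc, and the wedges of angle 2π/3 at a, b, c have bisector orientations 240°, 0°, 120° respectively, the edges (a,b) and (b,c) are present in the induced graph; i.e., a ∈ W_b, b ∈ W_a, c ∈ W_b, and b ∈ W_c. -/
open Real

noncomputable section

abbrev Pl := EuclideanSpace ℝ (Fin 2)

def pt (x y : ℝ) : Pl := (EuclideanSpace.equiv (Fin 2) ℝ).symm ![x, y]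

def dir (θ : ℝ) : Pl := pt (Real.cos θ) (Real.sin θ)

/-- Wedge with apex `p`, bisector orientation `θ`, angular width `α`. -/
def wedge (p : Pl) (θ α : ℝ) : Set Pl :=
  {q | q = p ∨ InnerProductGeometry.angle (q - p) (dir θ) ≤ α / 2}

end

open EuclideanGeometry

lemma inner_pl (u v : Pl) : (inner ℝ u v : ℝ) = u 0 * v 0 + u 1 * v 1 := by
  simp [PiLp.inner_apply, Fin.sum_univ_two, RCLike.inner_apply]
  ring

lemma norm_pl (u : Pl) : ‖u‖ = Real.sqrt (u 0 ^ 2 + u 1 ^ 2) := by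
  rw [EuclideanSpace.norm_eq]
  simp [Fin.sum_univ_two, Real.norm_eq_abs, sq_abs]

lemma dir_apply0 (θ : ℝ) : dir θ 0 = Real.cos θ := rfl
lemma dir_apply1 (θ : ℝ) : dir θ 1 = Real.sin θ := rfl

lemma norm_dir (θ : ℝ) : ‖dir θ‖ = 1 := by
  rw [norm_pl, dir_apply0, dir_apply1, Real.cos_sq_add_sin_sq, Real.sqrt_one]

lemma key (v d : Pl) (hv : v ≠ 0) (hd : ‖d‖ = 1)
    (h : ‖v‖ / 2 ≤ (inner ℝ v d : ℝ)) : InnerProductGeometry.angle v d ≤ π / 3 := by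
  have hvn : 0 < ‖v‖ := norm_pos_iff.mpr hv
  rw [InnerProductGeometry.angle, hd, mul_one]
  have h12 : (1 : ℝ) / 2 ≤ (inner ℝ v d : ℝ) / ‖v‖ := by
    rw [le_div_iff₀ hvn]; linarith
  have h1 : Real.arccos ((inner ℝ v d : ℝ) / ‖v‖) ≤ Real.arccos (1 / 2) := by
    unfold Real.arccos
    have := Real.monotone_arcsin h12
    linarith
  have h2 : Real.arccos (1 / 2) = π / 3 := by
    rw [← Real.cos_pi_div_three]
    exact Real.arccos_cos (by positivity) (by linarith [Real.pi_pos])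
  linarith

/-- In the gadget orientation for a triangle `abc` with `∠b ≤ ∠c ≤ ∠a`, with `bc`
horizontal (`b` left of `c`) and `a` on or above the line `bc`, assigning to the
wedges of angle 2π/3 at `a`, `b`, `c` the bisector orientations 240°, 0°, 120°
(i.e. 4π/3, 0 and 2π/3 radians), the edges `(a,b)` and `(b,c)` are present in
the induced graph. -/
theorem stmt3 (a b c : Pl) (hind : AffineIndependent ℝ ![a, b, c])
    (h1 : ∠ a b c ≤ ∠ b c a) (h2 : ∠ b c a ≤ ∠ c a b)
    (hhoriz : b 1 = c 1) (hleft : b 0 < c 0) (habove : b 1 ≤ a 1) :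
    a ∈ wedge b 0 (2 * π / 3) ∧ b ∈ wedge a (4 * π / 3) (2 * π / 3) ∧
    c ∈ wedge b 0 (2 * π / 3) ∧ b ∈ wedge c (2 * π / 3) (2 * π / 3) := by
  have hinj := hind.injective
  have hba : b ≠ a := fun h => by
    have : (![a, b, c] 1) = (![a, b, c] 0) := by simpa using h
    exact absurd (hinj this) (by decide)
  have hca : c ≠ a := fun h => by
    have : (![a, b, c] 2) = (![a, b, c] 0) := by simpa using h
    exact absurd (hinj this) (by decide)
  have hab : a ≠ b := hba.symm
  set s : ℝ := c 0 - b 0 with hs_def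
  have hs : 0 < s := by simp [hs_def]; linarith
  -- the angle at b is at most π/3
  have hsum : ∠ a b c + ∠ b c a + ∠ c a b = π :=
    EuclideanGeometry.angle_add_angle_add_angle_eq_pi c hba
  have habc_le : ∠ a b c ≤ π / 3 := by linarith
  -- norms
  have hvab : a - b ≠ 0 := sub_ne_zero.mpr hab
  have hNpos : 0 < ‖a - b‖ := norm_pos_iff.mpr hvab
  have hncb : ‖c - b‖ = s := by
    have h0 : (c - b) 0 = s := rfl
    have h1' : (c - b) 1 = 0 := by
      show c 1 - b 1 = 0
      rw [hhoriz]; ring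
    rw [norm_pl, h0, h1']
    rw [show s ^ 2 + 0 ^ 2 = s ^ 2 by ring]
    exact Real.sqrt_sq hs.le
  -- cos of the angle at b
  have hcosv : Real.cos (∠ a b c) = (a 0 - b 0) / ‖a - b‖ := by
    rw [EuclideanGeometry.angle, InnerProductGeometry.cos_angle, vsub_eq_sub, vsub_eq_sub]
    have hin : (inner ℝ (a - b) (c - b) : ℝ) = (a 0 - b 0) * s := by
      rw [inner_pl]
      have h1' : (c - b) 1 = 0 := by
        show c 1 - b 1 = 0
        rw [hhoriz]; ring
      rw [h1']
      show (a 0 - b 0) * (c 0 - b 0) + (a 1 - b 1) * 0 = (a 0 - b 0) * s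
      ring
    rw [hin, hncb]
    field_simp
  have hK : ‖a - b‖ / 2 ≤ a 0 - b 0 := by
    have hc := Real.cos_le_cos_of_nonneg_of_le_pi (EuclideanGeometry.angle_nonneg a b c)
      (by linarith [Real.pi_pos]) habc_le
    rw [Real.cos_pi_div_three, hcosv, le_div_iff₀ hNpos] at hc
    linarith
  have hhalf : (2 * π / 3) / 2 = π / 3 := by ring
  refine ⟨?_, ?_, ?_, ?_⟩
  · -- a ∈ wedge b 0
    refine Or.inr ?_
    rw [hhalf]
    refine key _ _ hvab (norm_dir 0) ?_
    rw [inner_pl, dir_apply0, dir_apply1, Real.cos_zero, Real.sin_zero]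
    show ‖a - b‖ / 2 ≤ (a 0 - b 0) * 1 + (a 1 - b 1) * 0
    linarith
  · -- b ∈ wedge a (4π/3)
    refine Or.inr ?_
    rw [hhalf]
    have hvba : b - a ≠ 0 := sub_ne_zero.mpr hba
    refine key _ _ hvba (norm_dir _) ?_
    have hc4 : Real.cos (4 * π / 3) = -(1 / 2) := by
      rw [show (4 * π / 3 : ℝ) = π + π / 3 by ring, Real.cos_add, Real.cos_pi, Real.sin_pi,
        Real.cos_pi_div_three]
      ring
    have hs4 : Real.sin (4 * π / 3) = -(Real.sqrt 3 / 2) := by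
      rw [show (4 * π / 3 : ℝ) = π + π / 3 by ring, Real.sin_add, Real.cos_pi, Real.sin_pi,
        Real.sin_pi_div_three]
      ring
    rw [inner_pl, dir_apply0, dir_apply1, hc4, hs4]
    have hnorm : ‖b - a‖ = ‖a - b‖ := norm_sub_rev _ _
    set x : ℝ := a 0 - b 0 with hx
    set y : ℝ := a 1 - b 1 with hy
    have hyn : 0 ≤ y := by simp [hy]; linarith
    have hb0 : (b - a) 0 = -x := by show b 0 - a 0 = -x; rw [hx]; ring
    have hb1 : (b - a) 1 = -y := by show b 1 - a 1 = -y; rw [hy]; ring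
    rw [hnorm, hb0, hb1]
    have hxpos : ‖a - b‖ / 2 ≤ x := hK
    have hN : ‖a - b‖ = Real.sqrt (x ^ 2 + y ^ 2) := by
      rw [norm_pl]; rfl
    have hNsq : ‖a - b‖ ^ 2 = x ^ 2 + y ^ 2 := by
      rw [hN]; exact Real.sq_sqrt (by positivity)
    have hsq3 : Real.sqrt 3 ^ 2 = 3 := Real.sq_sqrt (by norm_num)
    have h3n : 0 ≤ Real.sqrt 3 := Real.sqrt_nonneg 3
    have hxnn : 0 ≤ x := le_trans (by positivity) hxpos
    -- need : ‖a-b‖/2 ≤ -x * -(1/2) + -y * -(√3/2) = x/2 + √3 y /2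
    have hle : ‖a - b‖ ≤ x + Real.sqrt 3 * y := by
      rw [hN]
      have hsqle : x ^ 2 + y ^ 2 ≤ (x + Real.sqrt 3 * y) ^ 2 := by
        nlinarith [mul_nonneg h3n (mul_nonneg hxnn hyn), sq_nonneg y]
      calc Real.sqrt (x ^ 2 + y ^ 2) ≤ Real.sqrt ((x + Real.sqrt 3 * y) ^ 2) :=
            Real.sqrt_le_sqrt hsqle
        _ = x + Real.sqrt 3 * y := Real.sqrt_sq (by positivity)
    have hrw : -x * -(1 / 2) + -y * -(Real.sqrt 3 / 2) = (x + Real.sqrt 3 * y) / 2 := by ring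
    rw [hrw]
    gcongr
  · -- c ∈ wedge b 0
    refine Or.inr ?_
    rw [hhalf]
    have hvcb : c - b ≠ 0 := by
      intro h
      have : (c - b) 0 = 0 := by rw [h]; rfl
      have : s = 0 := this
      linarith
    refine key _ _ hvcb (norm_dir 0) ?_
    rw [inner_pl, dir_apply0, dir_apply1, Real.cos_zero, Real.sin_zero, hncb]
    show s / 2 ≤ (c 0 - b 0) * 1 + (c 1 - b 1) * 0
    rw [hs_def]; linarith
  · -- b ∈ wedge c (2π/3)
    refine Or.inr ?_
    rw [hhalf]
    have hvbc : b - c ≠ 0 := by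
      intro h
      have : (b - c) 0 = 0 := by rw [h]; rfl
      have hh : b 0 - c 0 = 0 := this
      linarith
    refine key _ _ hvbc (norm_dir _) ?_
    have hc2 : Real.cos (2 * π / 3) = -(1 / 2) := by
      rw [show (2 * π / 3 : ℝ) = π - π / 3 by ring, Real.cos_pi_sub, Real.cos_pi_div_three]
    have hs2 : Real.sin (2 * π / 3) = Real.sqrt 3 / 2 := by
      rw [show (2 * π / 3 : ℝ) = π - π / 3 by ring, Real.sin_pi_sub, Real.sin_pi_div_three]
    rw [inner_pl, dir_apply0, dir_apply1, hc2, hs2]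
    have hnbc : ‖b - c‖ = s := by rw [norm_sub_rev, hncb]
    have hb0 : (b - c) 0 = -s := by show b 0 - c 0 = -s; rw [hs_def]; ring
    have hb1 : (b - c) 1 = 0 := by show b 1 - c 1 = 0; rw [hhoriz]; ring
    rw [hnbc, hb0, hb1]
    nlinarith
end

section
/- For every n ≥ 2, there exists a set P of n points in the plane such that for every spanning tree T of P whose angular span at every vertex is at most 2π/3 (more generally, less than π), wt(T) ≥ 2·wt(MST(P)) − O(diam(P)/n)·wt(MST(P)); concretely, for n collinear equally spaced points, any spanning tree with all angular spans strictly less than π has weight at least 2(n−1) − 1 times the spacing, while the MST has weight (n−1) times the spacing. -/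
open Real

open scoped Classical in
/-- Total Euclidean edge weight of a geometric graph. -/
noncomputable def wt {V : Type*} [Fintype V] (G : SimpleGraph V) (pos : V → Pl) : ℝ :=
  (∑ p : V, ∑ q : V, if G.Adj p q then dist (pos p) (pos q) else 0) / 2

private lemma pt_sub' (a b : ℝ) : pt a 0 - pt b 0 = (a - b) • pt 1 0 := by
  ext i
  fin_cases i <;> simp [pt, EuclideanSpace.equiv]

private lemma dist_pt' (a b : ℝ) : dist (pt a 0) (pt b 0) = |a - b| := by
  simp [EuclideanSpace.dist_eq, Fin.sum_univ_two, pt, Real.dist_eq, Real.sqrt_sq_eq_abs]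

private lemma angle_side' (θ α : ℝ) (hα : α < π) {c d : ℝ} (hc : c < 0) (hd : 0 < d)
    (h1 : InnerProductGeometry.angle (c • pt 1 0) (dir θ) ≤ α / 2)
    (h2 : InnerProductGeometry.angle (d • pt 1 0) (dir θ) ≤ α / 2) : False := by
  rw [InnerProductGeometry.angle_smul_left_of_neg _ _ hc,
    InnerProductGeometry.angle_neg_left] at h1
  rw [InnerProductGeometry.angle_smul_left_of_pos _ _ hd] at h2
  linarith

private lemma abs_Ioo' {n : ℕ} (p q : Fin n) (h : p < q) :
    |(p : ℝ) - q| = 1 + ((Finset.Ioo p q).card : ℝ) := by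
  obtain ⟨k, hk⟩ : ∃ k, q.val = p.val + k + 1 := ⟨q.val - p.val - 1, by omega⟩
  have hcard : (Finset.Ioo p q).card = k := by rw [Fin.card_Ioo]; omega
  have hq : (q : ℝ) = (p : ℝ) + k + 1 := by rw [hk]; push_cast; ring
  rw [hcard, hq]
  rw [abs_of_nonpos (by linarith)]
  ring

open scoped Classical in
private lemma indsum' {α : Type*} [Fintype α] (s : Finset α) :
    (∑ v : α, if v ∈ s then (1:ℝ) else 0) = (s.card : ℝ) := by
  rw [Finset.sum_boole]
  congr 1
  simp [Finset.filter_mem_eq_inter]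

/-- For `n` collinear points spaced at unit distance, every spanning tree whose
angular span at each point is strictly less than π has weight at least `2n − 3`,
while the minimum spanning tree has weight `n − 1`. -/
theorem stmt7 (n : ℕ) (hn : 2 ≤ n) (pts : Fin n → Pl)
    (hpts : ∀ i : Fin n, pts i = pt (i : ℝ) 0)
    (T : SimpleGraph (Fin n)) (htree : T.IsTree)
    (hspan : ∀ p : Fin n, ∃ θ α : ℝ, α < π ∧
      ∀ q : Fin n, T.Adj p q → pts q ∈ wedge (pts p) θ α) :
    wt T pts ≥ 2 * (n : ℝ) - 3 := by
  classical
  -- one-sidedness at every vertex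
  have hside : ∀ p q r : Fin n, T.Adj p q → T.Adj p r → q < p → p < r → False := by
    intro p q r hq hr hqp hpr
    obtain ⟨θ, α, hα, hw⟩ := hspan p
    have key : ∀ s : Fin n, T.Adj p s →
        InnerProductGeometry.angle (((s : ℝ) - (p : ℝ)) • pt 1 0) (dir θ) ≤ α / 2 := by
      intro s hs
      rcases hw s hs with h | h
      · exfalso
        rw [hpts s, hpts p] at h
        have h0 : ((s : ℝ)) = (p : ℝ) := congrArg (fun f => f 0) h
        have : s = p := by
          have : (s : ℕ) = (p : ℕ) := by exact_mod_cast h0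
          exact Fin.ext this
        exact hs.ne' this
      · rw [hpts s, hpts p, pt_sub'] at h
        exact h
    have hq' : ((q : ℝ) - (p : ℝ)) < 0 := by
      have : (q : ℝ) < (p : ℝ) := by exact_mod_cast hqp
      linarith
    have hr' : (0 : ℝ) < ((r : ℝ) - (p : ℝ)) := by
      have : (p : ℝ) < (r : ℝ) := by exact_mod_cast hpr
      linarith
    exact angle_side' θ α hα hq' hr' (key q hq) (key r hr)
  -- every vertex has a neighbor
  have hnbr : ∀ v : Fin n, ∃ q, T.Adj v q := by
    intro v
    haveI : Nontrivial (Fin n) := Fin.nontrivial_iff_two_le.2 hn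
    obtain ⟨u, hu⟩ := exists_ne v
    obtain ⟨w⟩ := htree.isConnected.preconnected v u
    obtain ⟨dd, -, h1, h2⟩ := w.exists_boundary_dart {v} rfl (by simpa using hu)
    have hv : dd.fst = v := h1
    exact ⟨dd.snd, hv ▸ dd.adj⟩
  -- every interior vertex is strictly spanned by some edge
  have hcross : ∀ v : Fin n, 0 < v.val → v.val + 1 < n →
      ∃ a b : Fin n, T.Adj a b ∧ a < v ∧ v < b := by
    intro v hv0 hv1
    obtain ⟨q0, hq0⟩ := hnbr v
    by_cases hcase : q0 < v
    · obtain ⟨w⟩ := htree.isConnected.preconnected v ⟨n - 1, by omega⟩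
      have hnot : (⟨n - 1, by omega⟩ : Fin n) ∉ ({u | u ≤ v} : Set (Fin n)) := by
        simp only [Set.mem_setOf_eq, not_le, Fin.lt_def]
        omega
      obtain ⟨dd, -, h1, h2⟩ := w.exists_boundary_dart {u | u ≤ v} (le_refl v) hnot
      have hfst : dd.fst ≤ v := h1
      have hsnd : v < dd.snd := lt_of_not_ge h2
      have hfstlt : dd.fst < v := by
        rcases lt_or_eq_of_le hfst with h | h
        · exact h
        · exact (hside v q0 dd.snd hq0 (h ▸ dd.adj) hcase hsnd).elim
      exact ⟨dd.fst, dd.snd, dd.adj, hfstlt, hsnd⟩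
    · have hq0v : v < q0 := lt_of_le_of_ne (not_lt.1 hcase) hq0.ne
      obtain ⟨w⟩ := htree.isConnected.preconnected v ⟨0, by omega⟩
      have hnot : (⟨0, by omega⟩ : Fin n) ∉ ({u | v ≤ u} : Set (Fin n)) := by
        simp only [Set.mem_setOf_eq, not_le, Fin.lt_def]
        omega
      obtain ⟨dd, -, h1, h2⟩ := w.exists_boundary_dart {u | v ≤ u} (le_refl v) hnot
      have hfst : v ≤ dd.fst := h1
      have hsnd : dd.snd < v := lt_of_not_ge h2
      have hfstgt : v < dd.fst := by
        rcases lt_or_eq_of_le hfst with h | h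
        · exact h
        · exact (hside v dd.snd q0 (h ▸ dd.adj) hq0 hsnd hq0v).elim
      exact ⟨dd.snd, dd.fst, dd.adj.symm, hsnd, hfstgt⟩
  -- distance formula
  have hdist : ∀ p q : Fin n, T.Adj p q →
      dist (pts p) (pts q) = 1 + ((Finset.Ioo (min p q) (max p q)).card : ℝ) := by
    intro p q h
    rw [hpts p, hpts q, dist_pt']
    rcases lt_or_gt_of_ne h.ne with hlt | hlt
    · rw [min_eq_left hlt.le, max_eq_right hlt.le]
      exact abs_Ioo' p q hlt
    · rw [min_eq_right hlt.le, max_eq_left hlt.le, abs_sub_comm]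
      exact abs_Ioo' q p hlt
  -- split weight
  have hsplit : wt T pts =
      ((∑ p : Fin n, ∑ q : Fin n, if T.Adj p q then (1:ℝ) else 0)
      + (∑ p : Fin n, ∑ q : Fin n, if T.Adj p q then
          ((Finset.Ioo (min p q) (max p q)).card : ℝ) else 0)) / 2 := by
    rw [wt, ← Finset.sum_add_distrib]
    congr 1
    apply Finset.sum_congr rfl
    intro p _
    rw [← Finset.sum_add_distrib]
    apply Finset.sum_congr rfl
    intro q _
    by_cases h : T.Adj p q
    · simp [h, hdist p q h]
    · simp [h]
  -- the number-of-edges part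
  have hA : (∑ p : Fin n, ∑ q : Fin n, if T.Adj p q then (1:ℝ) else 0)
      = 2 * ((n : ℝ) - 1) := by
    have hdeg : ∀ p : Fin n, (∑ q, if T.Adj p q then (1:ℝ) else 0) = (T.degree p : ℝ) := by
      intro p
      rw [Finset.sum_boole, SimpleGraph.degree, SimpleGraph.neighborFinset_eq_filter]
    have hec : T.edgeFinset.card + 1 = n := by
      simpa using htree.card_edgeFinset
    calc (∑ p : Fin n, ∑ q : Fin n, if T.Adj p q then (1:ℝ) else 0)
        = ∑ p : Fin n, (T.degree p : ℝ) := by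
          exact Finset.sum_congr rfl fun p _ => hdeg p
      _ = ((∑ p : Fin n, T.degree p : ℕ) : ℝ) := by push_cast; ring
      _ = ((2 * T.edgeFinset.card : ℕ) : ℝ) := by
          rw [SimpleGraph.sum_degrees_eq_twice_card_edges]
      _ = 2 * ((n : ℝ) - 1) := by
          push_cast
          have : (T.edgeFinset.card : ℝ) + 1 = n := by exact_mod_cast hec
          linarith
  -- the spanning part
  set F : Fin n → Fin n → Fin n → ℝ := fun p q v =>
    if T.Adj p q ∧ (min p q < v ∧ v < max p q) then 1 else 0 with hF
  have hFnonneg : ∀ p q v, 0 ≤ F p q v := by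
    intro p q v
    rw [hF]
    dsimp only
    split <;> norm_num
  have hB : (∑ p : Fin n, ∑ q : Fin n, if T.Adj p q then
      ((Finset.Ioo (min p q) (max p q)).card : ℝ) else 0) ≥ 2 * ((n : ℝ) - 2) := by
    have step1 : (∑ p : Fin n, ∑ q : Fin n, if T.Adj p q then
        ((Finset.Ioo (min p q) (max p q)).card : ℝ) else 0)
        = ∑ v : Fin n, ∑ p : Fin n, ∑ q : Fin n, F p q v := by
      have step0 : (∑ p : Fin n, ∑ q : Fin n, if T.Adj p q then
          ((Finset.Ioo (min p q) (max p q)).card : ℝ) else 0)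
          = ∑ p : Fin n, ∑ q : Fin n, ∑ v : Fin n, F p q v := by
        apply Finset.sum_congr rfl
        intro p _
        apply Finset.sum_congr rfl
        intro q _
        by_cases h : T.Adj p q
        · rw [if_pos h, ← indsum' (Finset.Ioo (min p q) (max p q))]
          apply Finset.sum_congr rfl
          intro v _
          rw [hF]
          simp [h, Finset.mem_Ioo]
        · rw [if_neg h]
          rw [eq_comm]
          apply Finset.sum_eq_zero
          intro v _
          rw [hF]
          simp [h]
      rw [step0]
      calc (∑ p : Fin n, ∑ q : Fin n, ∑ v : Fin n, F p q v)
          = ∑ p : Fin n, ∑ v : Fin n, ∑ q : Fin n, F p q v :=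
            Finset.sum_congr rfl fun p _ => Finset.sum_comm
        _ = ∑ v : Fin n, ∑ p : Fin n, ∑ q : Fin n, F p q v := Finset.sum_comm
    rw [step1]
    -- lower bound each interior vertex's contribution by 2
    have hinner : ∀ v : Fin n, 0 < v.val → v.val + 1 < n →
        (2:ℝ) ≤ ∑ p : Fin n, ∑ q : Fin n, F p q v := by
      intro v h0 h1
      obtain ⟨a, b, hab, hav, hvb⟩ := hcross v h0 h1
      have habne : a ≠ b := ne_of_lt (lt_trans hav hvb)
      have hFa : F a b v = 1 := by
        rw [hF]
        have : min a b = a := min_eq_left (le_of_lt (lt_trans hav hvb))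
        have h2 : max a b = b := max_eq_right (le_of_lt (lt_trans hav hvb))
        simp [hab, this, h2, hav, hvb]
      have hFb : F b a v = 1 := by
        rw [hF]
        have : min b a = a := min_eq_right (le_of_lt (lt_trans hav hvb))
        have h2 : max b a = b := max_eq_left (le_of_lt (lt_trans hav hvb))
        simp [hab.symm, this, h2, hav, hvb]
      have hsub : ({a, b} : Finset (Fin n)) ⊆ Finset.univ := Finset.subset_univ _
      have step2 : (∑ p ∈ ({a, b} : Finset (Fin n)), ∑ q : Fin n, F p q v)
          ≤ ∑ p : Fin n, ∑ q : Fin n, F p q v := by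
        apply Finset.sum_le_sum_of_subset_of_nonneg hsub
        intro p _ _
        exact Finset.sum_nonneg fun q _ => hFnonneg p q v
      rw [Finset.sum_pair habne] at step2
      have ha : F a b v ≤ ∑ q : Fin n, F a q v :=
        Finset.single_le_sum (fun q _ => hFnonneg a q v) (Finset.mem_univ b)
      have hb : F b a v ≤ ∑ q : Fin n, F b q v :=
        Finset.single_le_sum (fun q _ => hFnonneg b q v) (Finset.mem_univ a)
      rw [hFa] at ha
      rw [hFb] at hb
      linarith
    have hmid : (Finset.Ioo (⟨0, by omega⟩ : Fin n) ⟨n - 1, by omega⟩).card = n - 2 := by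
      rw [Fin.card_Ioo]
      simp
      omega
    calc (2:ℝ) * ((n : ℝ) - 2)
        = ∑ _v ∈ Finset.Ioo (⟨0, by omega⟩ : Fin n) ⟨n - 1, by omega⟩, (2:ℝ) := by
          rw [Finset.sum_const, hmid, nsmul_eq_mul]
          have : ((n - 2 : ℕ) : ℝ) = (n : ℝ) - 2 := by
            have : (2:ℕ) ≤ n := hn
            push_cast [Nat.cast_sub this]
            ring
          rw [this]; ring
      _ ≤ ∑ v ∈ Finset.Ioo (⟨0, by omega⟩ : Fin n) ⟨n - 1, by omega⟩,
            ∑ p : Fin n, ∑ q : Fin n, F p q v := by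
          apply Finset.sum_le_sum
          intro v hv
          rw [Finset.mem_Ioo, Fin.lt_def, Fin.lt_def] at hv
          exact hinner v (by omega) (by omega)
      _ ≤ ∑ v : Fin n, ∑ p : Fin n, ∑ q : Fin n, F p q v := by
          apply Finset.sum_le_sum_of_subset_of_nonneg (Finset.subset_univ _)
          intro v _ _
          exact Finset.sum_nonneg fun p _ =>
            Finset.sum_nonneg fun q _ => hFnonneg p q v
  rw [hsplit, hA]
  linarith
end
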